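/- arXiv:1502.01617 — 2 statements merged into one kernel-verified Lean document; each statement's English description precedes it below -/
import Mathlib

section
/- Let θ₁ ∈ ℝ, z₁ = e^{iθ₁}, and w_δ(z) = 1/(2π) − (1/π)·z/(z−z₁) for |z| < 1. Then for every real ρ with 0 ≤ ρ < 1, the integral over the circle of radius ρ of the real part equals one: ∫_{-π}^{π} Re[w_δ(ρ e^{iθ})] dθ = 1. -/
open MeasureTheory Real

/-- For `z₁ = e^{iθ₁}` and `w_δ(z) = 1/(2π) - (1/π) z/(z - z₁)`, the integral of the
real part of `w_δ` over the circle of radius `ρ < 1` equals `1`. -/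
theorem stmt16 (θ₁ : ℝ) (z₁ : ℂ) (hz₁ : z₁ = Complex.exp (θ₁ * Complex.I)) :
    ∀ ρ : ℝ, 0 ≤ ρ → ρ < 1 →
      ∫ θ in Set.Icc (-π) π,
        (1 / (2 * (π : ℂ)) - (1 / (π : ℂ)) * ((ρ : ℂ) * Complex.exp (θ * Complex.I))
          / ((ρ : ℂ) * Complex.exp (θ * Complex.I) - z₁)).re = 1 := by
  intro ρ hρ0 hρ1
  have hπ : (0:ℝ) < π := Real.pi_pos
  have hπC : (π:ℂ) ≠ 0 := by exact_mod_cast hπ.ne'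
  have habs1 : ‖z₁‖ = 1 := by
    rw [hz₁]; simp [Complex.norm_exp_ofReal_mul_I]
  have hz1ne : z₁ ≠ 0 := by
    intro h; rw [h] at habs1; simp at habs1
  -- f θ = ρ e^{iθ}
  set f : ℝ → ℂ := fun θ => circleMap 0 ρ θ with hf
  have hfabs : ∀ θ, ‖f θ‖ = ρ := by
    intro θ; simp [hf, circleMap, abs_of_nonneg hρ0, Complex.norm_exp_ofReal_mul_I]
  have hfe : ∀ θ : ℝ, f θ = (ρ:ℂ) * Complex.exp (θ * Complex.I) := by
    intro θ; simp [hf, circleMap]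
  have hne : ∀ θ : ℝ, f θ - z₁ ≠ 0 := by
    intro θ h
    have h2 := hfabs θ
    rw [sub_eq_zero.mp h, habs1] at h2
    linarith
  -- G = integrand
  set G : ℝ → ℂ := fun θ => 1 / (2 * (π:ℂ)) - (1 / (π:ℂ)) * f θ / (f θ - z₁) with hG
  have hcont : Continuous G := by
    apply Continuous.sub continuous_const
    exact (continuous_const.mul (continuous_circleMap 0 ρ)).div
      ((continuous_circleMap 0 ρ).sub continuous_const) hne
  -- u θ in slit plane
  have hslit : ∀ θ : ℝ, (1 - f θ / z₁) ∈ Complex.slitPlane := by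
    intro θ
    refine Complex.mem_slitPlane_iff.mpr (Or.inl ?_)
    have h1 : ‖f θ / z₁‖ = ρ := by
      rw [norm_div, hfabs, habs1, div_one]
    have h2 : (f θ / z₁).re ≤ ρ := h1 ▸ Complex.re_le_norm _
    simp only [Complex.sub_re, Complex.one_re]
    linarith
  have huane : ∀ θ : ℝ, (1 - f θ / z₁) ≠ 0 := fun θ =>
    Complex.slitPlane_ne_zero (hslit θ)
  -- antiderivative
  set A : ℝ → ℂ := fun θ => (θ:ℂ) / (2 * π) + (Complex.I / π) * Complex.log (1 - f θ / z₁) with hA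
  have hderiv : ∀ θ : ℝ, HasDerivAt A (G θ) θ := by
    intro θ
    have hu : HasDerivAt (fun θ => 1 - f θ / z₁) (-(f θ * Complex.I / z₁)) θ := by
      simpa using (((hasDerivAt_circleMap 0 ρ θ).div_const z₁).const_sub 1)
    have hlog : HasDerivAt (fun θ => Complex.log (1 - f θ / z₁))
        ((1 - f θ / z₁)⁻¹ * (-(f θ * Complex.I / z₁))) θ :=
      by exact (Complex.hasDerivAt_log (hslit θ)).comp (𝕜 := ℝ) θ hu
    have h1 : HasDerivAt (fun θ : ℝ => (θ:ℂ) / (2 * π)) (1 / (2 * (π:ℂ))) θ := by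
      simpa using (Complex.ofRealCLM.hasDerivAt (x := θ)).div_const (2 * (π:ℂ))
    have := h1.add ((hlog.const_mul (Complex.I / π)))
    convert this using 1
    case e'_4 => rfl
    case e'_8 => rfl
    have hzf : z₁ - f θ ≠ 0 := by
      simpa [neg_sub] using neg_ne_zero.mpr (hne θ)
    have e1 : (1 - f θ / z₁)⁻¹ = z₁ * (z₁ - f θ)⁻¹ := by
      rw [show (1 - f θ / z₁) = (z₁ - f θ) / z₁ by field_simp, inv_div]
      ring
    have hx : (π:ℂ) * f θ - (π:ℂ) * z₁ ≠ 0 := by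
      rw [← mul_sub]; exact mul_ne_zero hπC (hne θ)
    rw [hG, e1]
    field_simp
    ring_nf
    rw [Complex.I_sq]
    field_simp [hx, hne θ]
    ring
  -- integrability
  have hInt : IntervalIntegrable G volume (-π) π := hcont.intervalIntegrable _ _
  have hftc : ∫ θ in (-π)..π, G θ = A π - A (-π) :=
    intervalIntegral.integral_eq_sub_of_hasDerivAt (fun θ _ => hderiv θ) hInt
  have hend : A π - A (-π) = 1 := by
    have he1 : f π = -(ρ:ℂ) := by
      rw [hfe]; simp [Complex.exp_pi_mul_I]
    have he2 : f (-π) = -(ρ:ℂ) := by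
      rw [hfe]
      have : ((-π : ℝ) : ℂ) * Complex.I = -(π * Complex.I) := by push_cast; ring
      rw [this, Complex.exp_neg, Complex.exp_pi_mul_I]
      norm_num
    rw [hA]
    simp only [he1, he2]
    push_cast
    field_simp
    ring
  have hval : ∫ θ in (-π)..π, G θ = 1 := by rw [hftc, hend]
  -- convert set integral
  have hIcc : ∫ θ in Set.Icc (-π) π, (G θ).re = ∫ θ in (-π)..π, (G θ).re := by
    rw [intervalIntegral.integral_of_le (by linarith), integral_Icc_eq_integral_Ioc]
  calc ∫ θ in Set.Icc (-π) π,
        (1 / (2 * (π : ℂ)) - (1 / (π : ℂ)) * ((ρ : ℂ) * Complex.exp (θ * Complex.I))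
          / ((ρ : ℂ) * Complex.exp (θ * Complex.I) - z₁)).re
      = ∫ θ in Set.Icc (-π) π, (G θ).re := by
        apply setIntegral_congr_fun measurableSet_Icc
        intro θ _; rw [hG]; simp only [hfe]
    _ = ∫ θ in (-π)..π, (G θ).re := hIcc
    _ = (∫ θ in (-π)..π, G θ).re := by
        rw [intervalIntegral.integral_of_le (by linarith),
          intervalIntegral.integral_of_le (by linarith)]
        exact integral_re (hcont.integrableOn_Ioc)  -- maybe wrong name
    _ = (1:ℂ).re := by rw [hval]
    _ = 1 := Complex.one_re
end

section
/- Let θ₁ ∈ ℝ, z₁ = e^{iθ₁}, and w_δ(z) = 1/(2π) − (1/π)·z/(z−z₁) for |z| < 1. Then for every real θ with e^{iθ} ≠ e^{iθ₁} (i.e. θ not congruent to θ₁ modulo 2π), the radial boundary limit of the real part vanishes: lim_{ρ→1⁻} Re[w_δ(ρ e^{iθ})] = 0. -/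
open Real Filter Topology

lemma re_half (a b : ℂ) (ha : ‖a‖ = 1) (hb : ‖b‖ = 1)
    (hab : a ≠ b) : (a / (a - b)).re = 1 / 2 := by
  have ha0 : a ≠ 0 := by intro h; simp [h] at ha
  have hb0 : b ≠ 0 := by intro h; simp [h] at hb
  have hsub : a - b ≠ 0 := sub_ne_zero.mpr hab
  have hca : starRingEnd ℂ a = a⁻¹ := by
    rw [Complex.inv_def]; simp [Complex.normSq_eq_norm_sq, ha]
  have hcb : starRingEnd ℂ b = b⁻¹ := by
    rw [Complex.inv_def]; simp [Complex.normSq_eq_norm_sq, hb]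
  have hsub' : b - a ≠ 0 := sub_ne_zero.mpr (Ne.symm hab)
  have key : a / (a - b) + starRingEnd ℂ (a / (a - b)) = 1 := by
    rw [map_div₀, map_sub, hca, hcb]
    have h2 : a⁻¹ / (a⁻¹ - b⁻¹) = b / (b - a) := by
      rw [div_eq_div_iff _ hsub']
      · field_simp
      · rw [sub_ne_zero]
        intro h
        exact hab (by rw [← inv_inv a, h, inv_inv])
    rw [h2, div_add_div _ _ hsub hsub']
    rw [div_eq_one_iff_eq (by exact mul_ne_zero hsub hsub')]
    ring
  have := congrArg Complex.re key
  rw [Complex.add_conj] at this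
  simp at this
  linarith

/-- For `z₁ = e^{iθ₁}` and `w_δ(z) = 1/(2π) - (1/π) z/(z - z₁)`, at every angle `θ`
with `e^{iθ} ≠ e^{iθ₁}` the radial boundary limit of the real part of `w_δ`
vanishes: `Re[w_δ(ρ e^{iθ})] → 0` as `ρ → 1⁻`. -/
theorem stmt17 (θ₁ : ℝ) (z₁ : ℂ) (hz₁ : z₁ = Complex.exp (θ₁ * Complex.I))
    (θ : ℝ) (hθ : Complex.exp (θ * Complex.I) ≠ Complex.exp (θ₁ * Complex.I)) :
    Tendsto (fun ρ : ℝ =>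
        (1 / (2 * (π : ℂ)) - (1 / (π : ℂ)) * ((ρ : ℂ) * Complex.exp (θ * Complex.I))
          / ((ρ : ℂ) * Complex.exp (θ * Complex.I) - z₁)).re)
      (nhdsWithin 1 (Set.Iio 1)) (𝓝 0) := by
  set a := Complex.exp (θ * Complex.I) with ha
  have hsub : a - z₁ ≠ 0 := by rw [hz₁]; exact sub_ne_zero.mpr hθ
  have habs : ‖a‖ = 1 := by rw [ha, Complex.norm_exp]; simp
  have hzabs : ‖z₁‖ = 1 := by rw [hz₁, Complex.norm_exp]; simp
  have hcont : ContinuousAt (fun ρ : ℝ =>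
      (1 / (2 * (π : ℂ)) - (1 / (π : ℂ)) * ((ρ : ℂ) * a) / ((ρ : ℂ) * a - z₁)).re) 1 := by
    apply Complex.continuous_re.continuousAt.comp
    apply ContinuousAt.sub continuousAt_const
    apply ContinuousAt.div
    · fun_prop
    · fun_prop
    · simpa using hsub
  have hval : (1 / (2 * (π : ℂ)) - (1 / (π : ℂ)) * ((1 : ℝ) * a) / ((1 : ℝ) * a - z₁)).re = 0 := by
    have hre := re_half a z₁ habs hzabs (by rw [hz₁]; exact hθ)
    have e1 : (1:ℂ)/(2*(π:ℂ)) = ((1/(2*π):ℝ):ℂ) := by push_cast; ring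
    have e2 : (1:ℂ)/(π:ℂ) = ((1/π:ℝ):ℂ) := by push_cast; ring
    rw [Complex.ofReal_one, one_mul, mul_div_assoc, e1, e2, Complex.sub_re,
      Complex.ofReal_re, Complex.re_ofReal_mul, hre]
    have hπ : π ≠ 0 := Real.pi_ne_zero
    field_simp
    ring
  have h := hcont.tendsto
  rw [hval] at h
  exact h.mono_left nhdsWithin_le_nhds
end
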